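/- The SSPERK(10,4) method satisfies the SSP conditions at parameter r = 6: with K = [[A, 0], [bᵀ, 0]] ∈ ℝ^{11×11}, every entry of K(I + 6K)^{-1} is nonnegative and every component of 6K(I + 6K)^{-1}e is at most 1. Hence the SSP coefficient of SSPERK(10,4) is at least 6. -/

import Mathlib

open Matrix

/-- The matrix `K = [[A, 0], [bᵀ, 0]] ∈ ℝ^{(s+1)×(s+1)}`. -/
noncomputable def mkK {s : ℕ} (A : Matrix (Fin s) (Fin s) ℝ) (b : Fin s → ℝ) :
    Matrix (Fin (s + 1)) (Fin (s + 1)) ℝ :=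
  Matrix.of fun i j =>
    if hj : (j : ℕ) < s then
      if hi : (i : ℕ) < s then A ⟨i, hi⟩ ⟨j, hj⟩ else b ⟨j, hj⟩
    else 0

/-- Coefficient matrix of the optimal SSPERK(10,4) method (zero-indexed):
for `j < i`, the entry is `1/6` if `i ≤ 4` or `j ≥ 5`, and `1/15` otherwise. -/
noncomputable def A104 : Matrix (Fin 10) (Fin 10) ℝ :=
  Matrix.of fun i j =>
    if (j : ℕ) < (i : ℕ) then
      if (i : ℕ) ≤ 4 ∨ 5 ≤ (j : ℕ) then 1/6 else 1/15
    else 0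

/-- Weights of the optimal SSPERK(10,4) method. -/
noncomputable def b104 : Fin 10 → ℝ := fun _ => 1/10

/-- `30 K` as an integer matrix. -/
def Kz : Matrix (Fin 11) (Fin 11) ℤ :=
  Matrix.of fun i j =>
    if (j : ℕ) < 10 then
      (if (i : ℕ) < 10 then
        (if (j : ℕ) < (i : ℕ) then (if (i : ℕ) ≤ 4 ∨ 5 ≤ (j : ℕ) then 5 else 2) else 0)
      else 3)
    else 0

/-- `30 (I + 6K)` as an integer matrix. -/
def Nz : Matrix (Fin 11) (Fin 11) ℤ :=
  Matrix.of fun i j =>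
    (if i = j then 30 else 0) +
      6 * (if (j : ℕ) < 10 then
        (if (i : ℕ) < 10 then
          (if (j : ℕ) < (i : ℕ) then (if (i : ℕ) ≤ 4 ∨ 5 ≤ (j : ℕ) then 5 else 2) else 0)
        else 3) else 0)

/-- `25 (I + 6K)⁻¹` as an integer matrix. -/
def Mz : Matrix (Fin 11) (Fin 11) ℤ :=
  Matrix.of fun i j =>
    if (i : ℕ) = (j : ℕ) then 25
    else if (i : ℕ) = (j : ℕ) + 1 then
      (if (i : ℕ) = 5 then -10 else if (i : ℕ) = 10 then -15 else -25)
    else if (i : ℕ) = 10 ∧ (j : ℕ) = 4 then -9 else 0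

/-- `750 K (I + 6K)⁻¹` as an integer matrix. -/
def Pz : Matrix (Fin 11) (Fin 11) ℤ :=
  Matrix.of fun i j =>
    if (i : ℕ) = (j : ℕ) + 1 then
      (if (i : ℕ) = 5 then 50 else if (i : ℕ) = 10 then 75 else 125)
    else if (i : ℕ) = 10 ∧ (j : ℕ) = 4 then 45 else 0

def Iz : Matrix (Fin 11) (Fin 11) ℤ :=
  Matrix.of fun i j => if i = j then 750 else 0

lemma hNM : Nz * Mz = Iz := by decide
lemma hKMz : Kz * Mz = Pz := by decide
lemma hPnn : ∀ i j, 0 ≤ Pz i j := by intro i; fin_cases i <;> decide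
lemma hProw : ∀ i, 6 * ∑ j, Pz i j ≤ 750 := by decide

noncomputable abbrev φ : Matrix (Fin 11) (Fin 11) ℤ →+* Matrix (Fin 11) (Fin 11) ℝ :=
  (Int.castRingHom ℝ).mapMatrix

lemma hK : mkK A104 b104 = (30 : ℝ)⁻¹ • φ Kz := by
  ext i j
  simp only [mkK, A104, b104, Kz, Matrix.of_apply, Matrix.smul_apply,
    RingHom.mapMatrix_apply, Matrix.map_apply, Int.castRingHom, smul_eq_mul]
  split_ifs <;> norm_num

lemma hN : (1 : Matrix (Fin 11) (Fin 11) ℝ) + (6 : ℝ) • mkK A104 b104 = (30 : ℝ)⁻¹ • φ Nz := by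
  ext i j
  simp only [mkK, A104, b104, Nz, Matrix.of_apply, Matrix.smul_apply, Matrix.add_apply,
    Matrix.one_apply, RingHom.mapMatrix_apply, Matrix.map_apply, Int.castRingHom, smul_eq_mul]
  split_ifs <;> norm_num

lemma hIz : φ Iz = (750 : ℝ) • 1 := by
  ext i j
  simp only [Iz, Matrix.of_apply, Matrix.smul_apply, Matrix.one_apply,
    RingHom.mapMatrix_apply, Matrix.map_apply, Int.castRingHom, smul_eq_mul]
  split_ifs <;> norm_num

lemma hinv : (1 + (6 : ℝ) • mkK A104 b104)⁻¹ = (25 : ℝ)⁻¹ • φ Mz := by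
  apply Matrix.inv_eq_right_inv
  rw [hN, Matrix.smul_mul, Matrix.mul_smul, smul_smul, ← _root_.map_mul, hNM, hIz, smul_smul]
  norm_num

lemma hKM : mkK A104 b104 * (1 + (6 : ℝ) • mkK A104 b104)⁻¹ = (750 : ℝ)⁻¹ • φ Pz := by
  rw [hinv, hK, Matrix.smul_mul, Matrix.mul_smul, smul_smul, ← _root_.map_mul, hKMz]
  norm_num

/-- SSPERK(10,4) satisfies the SSP conditions at `r = 6`: with
`K = [[A, 0], [bᵀ, 0]] ∈ ℝ^{11×11}`, `K(I + 6K)⁻¹ ≥ 0` entrywise and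
`6K(I + 6K)⁻¹ e ≤ e` componentwise; hence its SSP coefficient is at least `6`. -/
theorem ssperk104_ssp_conditions :
    (∀ i j : Fin 11, 0 ≤ (mkK A104 b104 * (1 + (6 : ℝ) • mkK A104 b104)⁻¹) i j) ∧
    (∀ i : Fin 11,
      ((6 : ℝ) • (mkK A104 b104 * (1 + (6 : ℝ) • mkK A104 b104)⁻¹)).mulVec
        (fun _ => 1) i ≤ 1) := by
  rw [hKM]
  constructor
  · intro i j
    have h := hPnn i j
    simp only [Matrix.smul_apply, RingHom.mapMatrix_apply, Matrix.map_apply, Int.castRingHom,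
      smul_eq_mul]
    have h' : (0 : ℝ) ≤ (Pz i j : ℝ) := by exact_mod_cast h
    positivity
  · intro i
    have h := hProw i
    have h' : (6 : ℝ) * (∑ j, (Pz i j : ℝ)) ≤ 750 := by exact_mod_cast h
    rw [smul_smul, Matrix.smul_mulVec, Pi.smul_apply, smul_eq_mul]
    have hv : (φ Pz).mulVec (fun _ => (1 : ℝ)) i = ∑ j, (Pz i j : ℝ) := by
      simp [Matrix.mulVec, dotProduct, RingHom.mapMatrix_apply, Matrix.map_apply]
    rw [hv]
    nlinarith [h']
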